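/- Let E = (n, L, l) be a 1CSP instance with unit demands. If z_D^f(E) = 3, then Δ_p(E) < 1, i.e., E is a proper IRUP instance. -/

import Mathlib

open Finset
open scoped ENNReal NNReal

/-- A 1CSP instance with unit demands: `n` is a positive integer, the piece
lengths satisfy `0 < l 0 ≤ l 1 ≤ … ≤ l (n-1) ≤ L`. -/
def IsInstance (n : ℕ) (L : ℝ) (l : Fin n → ℝ) : Prop :=
  0 < n ∧ (∀ i, 0 < l i) ∧ (∀ i j : Fin n, i ≤ j → l i ≤ l j) ∧ (∀ i, l i ≤ L)

/-- a binary (0/1) pattern -/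
def IsBinary {n : ℕ} (a : Fin n → ℕ) : Prop := ∀ i, a i ≤ 1

/-- The set of feasible patterns `P^f(E)`. -/
def feasiblePatterns (n : ℕ) (L : ℝ) (l : Fin n → ℝ) : Set (Fin n → ℕ) :=
  {a | ∑ i, l i * (a i : ℝ) ≤ L}

/-- The set of proper patterns `P^p(E)` (for unit demands). -/
def properPatterns (n : ℕ) (L : ℝ) (l : Fin n → ℝ) : Set (Fin n → ℕ) :=
  {a | IsBinary a ∧ ∑ i, l i * (a i : ℝ) ≤ L}

/-- `z_D(P,E)`: minimum of `∑ x_a` over finitely supported `x : P → ℤ_{≥0}`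
with `∑ x_a • a = 𝟏`; (`⊤` if infeasible). -/
noncomputable def zD (n : ℕ) (P : Set (Fin n → ℕ)) : ℝ≥0∞ :=
  sInf {c : ℝ≥0∞ | ∃ x : (Fin n → ℕ) →₀ ℕ,
    (∀ a ∈ x.support, a ∈ P) ∧
    (∀ i, ∑ a ∈ x.support, x a * a i = 1) ∧
    c = ∑ a ∈ x.support, (x a : ℝ≥0∞)}

/-- `z_C(P,E)`: infimum of `∑ x_a` over finitely supported `x : P → ℝ_{≥0}`
with `∑ x_a • a = 𝟏`; (`⊤` if infeasible). -/
noncomputable def zC (n : ℕ) (P : Set (Fin n → ℕ)) : ℝ≥0∞ :=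
  sInf {c : ℝ≥0∞ | ∃ x : (Fin n → ℕ) →₀ NNReal,
    (∀ a ∈ x.support, a ∈ P) ∧
    (∀ i, ∑ a ∈ x.support, (x a : ℝ) * (a i : ℝ) = 1) ∧
    c = ∑ a ∈ x.support, (x a : ℝ≥0∞)}

noncomputable def zDf (n : ℕ) (L : ℝ) (l : Fin n → ℝ) : ℝ≥0∞ :=
  zD n (feasiblePatterns n L l)

noncomputable def zCf (n : ℕ) (L : ℝ) (l : Fin n → ℝ) : ℝ≥0∞ :=
  zC n (feasiblePatterns n L l)

noncomputable def zCp (n : ℕ) (L : ℝ) (l : Fin n → ℝ) : ℝ≥0∞ :=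
  zC n (properPatterns n L l)

/-- the gap `Δ(E) = z_D^f(E) - z_C^f(E)` -/
noncomputable def gap (n : ℕ) (L : ℝ) (l : Fin n → ℝ) : ℝ≥0∞ :=
  zDf n L l - zCf n L l

/-- the proper gap `Δ_p(E) = z_D^f(E) - z_C^p(E)` -/
noncomputable def properGap (n : ℕ) (L : ℝ) (l : Fin n → ℝ) : ℝ≥0∞ :=
  zDf n L l - zCp n L l

/-- the dominance relation `a ⪯ b`: all suffix sums of `a` are at most those of `b`. -/
def Dominates {n : ℕ} (a b : Fin n → ℕ) : Prop :=
  ∀ j : Fin n, ∑ i ∈ univ.filter (fun i => j ≤ i), a i ≤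
    ∑ i ∈ univ.filter (fun i => j ≤ i), b i

/-! ### Auxiliary lemmas -/

lemma key_lemma (n : ℕ) (L : ℝ) (l : Fin n → ℝ) (hn : 0 < n) (hl : ∀ i, 0 < l i)
    (y : (Fin n → Fin 2) → ℝ)
    (h0 : ∀ g, 0 ≤ y g)
    (hfeas : ∀ g, y g ≠ 0 → ∑ i, l i * ((g i : ℕ) : ℝ) ≤ L)
    (hcov : ∀ i, ∑ g, y g * ((g i : ℕ) : ℝ) = 1)
    (hval : ∑ g, y g ≤ 2) :
    ∃ g, y g ≠ 0 ∧ ∑ i, l i * (1 - ((g i : ℕ) : ℝ)) ≤ L := by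
  by_contra hno
  push_neg at hno
  set S : ℝ := ∑ i, l i with hS
  have hSpos : 0 < S := Finset.sum_pos (fun i _ => hl i)
    (by simp [Finset.univ_nonempty_iff, Fin.pos_iff_nonempty.mp hn])
  set c : ℝ := ∑ g, y g with hc
  have hT : ∑ g, y g * (∑ i, l i * ((g i : ℕ) : ℝ)) = S := by
    calc ∑ g, y g * (∑ i, l i * ((g i : ℕ) : ℝ))
        = ∑ g, ∑ i, l i * (y g * ((g i : ℕ) : ℝ)) := by
          apply Finset.sum_congr rfl; intro g _; rw [Finset.mul_sum]
          apply Finset.sum_congr rfl; intro i _; ring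
      _ = ∑ i, ∑ g, l i * (y g * ((g i : ℕ) : ℝ)) := Finset.sum_comm
      _ = ∑ i, l i * ∑ g, y g * ((g i : ℕ) : ℝ) := by
          apply Finset.sum_congr rfl; intro i _; rw [Finset.mul_sum]
      _ = S := by simp [hcov, hS]
  have hTL : S ≤ c * L := by
    rw [← hT, hc, Finset.sum_mul]
    apply Finset.sum_le_sum
    intro g _
    by_cases hg : y g = 0
    · simp [hg]
    · exact mul_le_mul_of_nonneg_left (hfeas g hg) (h0 g)
  obtain ⟨g₀, hg₀⟩ : ∃ g, y g ≠ 0 := by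
    by_contra hall
    push_neg at hall
    have := hcov ⟨0, hn⟩
    simp [hall] at this
  have hcomp : ∀ g, y g ≠ 0 → ∑ i, l i * ((g i : ℕ) : ℝ) < S - L := by
    intro g hg
    have := hno g hg
    have hsplit : ∑ i, l i * (1 - ((g i : ℕ) : ℝ)) = S - ∑ i, l i * ((g i : ℕ) : ℝ) := by
      rw [hS, ← Finset.sum_sub_distrib]
      apply Finset.sum_congr rfl; intro i _; ring
    rw [hsplit] at this
    linarith
  have hstrict : ∑ g, y g * (∑ i, l i * ((g i : ℕ) : ℝ)) < c * (S - L) := by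
    rw [hc, Finset.sum_mul]
    apply Finset.sum_lt_sum
    · intro g _
      by_cases hg : y g = 0
      · simp [hg]
      · exact le_of_lt (mul_lt_mul_of_pos_left (hcomp g hg) (lt_of_le_of_ne (h0 g) (Ne.symm hg)))
    · exact ⟨g₀, Finset.mem_univ g₀,
        mul_lt_mul_of_pos_left (hcomp g₀ hg₀) (lt_of_le_of_ne (h0 g₀) (Ne.symm hg₀))⟩
  rw [hT] at hstrict
  nlinarith [hTL, hstrict, hval, hSpos]

lemma transport_sum {n : ℕ} (x : (Fin n → ℕ) →₀ NNReal)
    (hb : ∀ a ∈ x.support, ∀ i, a i ≤ 1) (w : (Fin n → ℕ) → ℝ) :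
    ∑ g : Fin n → Fin 2, ((x (fun i => ((g i : ℕ)))) : ℝ) * w (fun i => ((g i : ℕ)))
      = ∑ a ∈ x.support, ((x a : ℝ)) * w a := by
  classical
  set pat : (Fin n → Fin 2) → (Fin n → ℕ) := fun g i => ((g i : ℕ)) with hpat
  have hinj : ∀ g ∈ (Finset.univ : Finset (Fin n → Fin 2)), ∀ g' ∈ Finset.univ,
      pat g = pat g' → g = g' := by
    intro g _ g' _ hgg
    funext i
    exact Fin.val_injective (congrFun hgg i)
  have h1 : ∑ a ∈ Finset.univ.image pat, ((x a : ℝ)) * w a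
      = ∑ g : Fin n → Fin 2, ((x (pat g)) : ℝ) * w (pat g) := Finset.sum_image hinj
  have hsub : x.support ⊆ Finset.univ.image pat := by
    intro a ha
    refine Finset.mem_image.mpr ⟨fun i => ⟨a i, by have := hb a ha i; omega⟩, Finset.mem_univ _, ?_⟩
    funext i; rfl
  have h2 : ∑ a ∈ x.support, ((x a : ℝ)) * w a = ∑ a ∈ Finset.univ.image pat, ((x a : ℝ)) * w a := by
    refine Finset.sum_subset hsub ?_
    intro a _ ha
    have : x a = 0 := Finsupp.notMem_support_iff.mp ha
    simp [this]
  rw [h2, h1]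

lemma exists_min_K (n : ℕ) (L : ℝ) (l : Fin n → ℝ)
    (hne : {y : (Fin n → Fin 2) → ℝ | (∀ g, 0 ≤ y g) ∧
      (∀ g, y g ≠ 0 → ∑ i, l i * ((g i : ℕ) : ℝ) ≤ L) ∧
      (∀ i, ∑ g, y g * ((g i : ℕ) : ℝ) = 1) ∧ ∑ g, y g ≤ 3}.Nonempty) :
    ∃ y, y ∈ {y : (Fin n → Fin 2) → ℝ | (∀ g, 0 ≤ y g) ∧
      (∀ g, y g ≠ 0 → ∑ i, l i * ((g i : ℕ) : ℝ) ≤ L) ∧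
      (∀ i, ∑ g, y g * ((g i : ℕ) : ℝ) = 1) ∧ ∑ g, y g ≤ 3} ∧
      ∀ z, z ∈ {y : (Fin n → Fin 2) → ℝ | (∀ g, 0 ≤ y g) ∧
      (∀ g, y g ≠ 0 → ∑ i, l i * ((g i : ℕ) : ℝ) ≤ L) ∧
      (∀ i, ∑ g, y g * ((g i : ℕ) : ℝ) = 1) ∧ ∑ g, y g ≤ 3} →
      ∑ g, y g ≤ ∑ g, z g := by
  classical
  set K : Set ((Fin n → Fin 2) → ℝ) := {y | (∀ g, 0 ≤ y g) ∧
      (∀ g, y g ≠ 0 → ∑ i, l i * ((g i : ℕ) : ℝ) ≤ L) ∧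
      (∀ i, ∑ g, y g * ((g i : ℕ) : ℝ) = 1) ∧ ∑ g, y g ≤ 3} with hK
  have hclosed : IsClosed K := by
    have hA : IsClosed {y : (Fin n → Fin 2) → ℝ | ∀ g, 0 ≤ y g} := by
      have : {y : (Fin n → Fin 2) → ℝ | ∀ g, 0 ≤ y g} = ⋂ g, {y | 0 ≤ y g} := by
        ext y; simp
      rw [this]
      exact isClosed_iInter fun g => isClosed_le continuous_const (continuous_apply g)
    have hB : IsClosed {y : (Fin n → Fin 2) → ℝ |
        ∀ g, y g ≠ 0 → ∑ i, l i * ((g i : ℕ) : ℝ) ≤ L} := by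
      have : {y : (Fin n → Fin 2) → ℝ | ∀ g, y g ≠ 0 → ∑ i, l i * ((g i : ℕ) : ℝ) ≤ L}
          = ⋂ g, {y | y g ≠ 0 → ∑ i, l i * ((g i : ℕ) : ℝ) ≤ L} := by ext y; simp
      rw [this]
      refine isClosed_iInter fun g => ?_
      by_cases hg : ∑ i, l i * ((g i : ℕ) : ℝ) ≤ L
      · have : {y : (Fin n → Fin 2) → ℝ | y g ≠ 0 → ∑ i, l i * ((g i : ℕ) : ℝ) ≤ L}
            = Set.univ := by ext y; simp [hg]
        rw [this]; exact isClosed_univ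
      · have : {y : (Fin n → Fin 2) → ℝ | y g ≠ 0 → ∑ i, l i * ((g i : ℕ) : ℝ) ≤ L}
            = {y | y g = 0} := by ext y; simp [hg]
        rw [this]; exact isClosed_eq (continuous_apply g) continuous_const
    have hC : IsClosed {y : (Fin n → Fin 2) → ℝ |
        ∀ i, ∑ g, y g * ((g i : ℕ) : ℝ) = 1} := by
      have : {y : (Fin n → Fin 2) → ℝ | ∀ i, ∑ g, y g * ((g i : ℕ) : ℝ) = 1}
          = ⋂ i, {y | ∑ g, y g * ((g i : ℕ) : ℝ) = 1} := by ext y; simp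
      rw [this]
      exact isClosed_iInter fun i => isClosed_eq
        (continuous_finset_sum _ fun g _ => (continuous_apply g).mul continuous_const)
        continuous_const
    have hD : IsClosed {y : (Fin n → Fin 2) → ℝ | ∑ g, y g ≤ 3} :=
      isClosed_le (continuous_finset_sum _ fun g _ => continuous_apply g) continuous_const
    have : K = {y : (Fin n → Fin 2) → ℝ | ∀ g, 0 ≤ y g} ∩
        ({y | ∀ g, y g ≠ 0 → ∑ i, l i * ((g i : ℕ) : ℝ) ≤ L} ∩
        ({y | ∀ i, ∑ g, y g * ((g i : ℕ) : ℝ) = 1} ∩ {y | ∑ g, y g ≤ 3})) := by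
      ext y; simp [hK, Set.mem_setOf_eq, and_assoc]
    rw [this]
    exact hA.inter (hB.inter (hC.inter hD))
  have hsubIcc : K ⊆ Set.pi Set.univ (fun _ : Fin n → Fin 2 => Set.Icc (0:ℝ) 3) := by
    intro y hy
    obtain ⟨h0, _, _, hsum⟩ := hy
    intro g _
    refine ⟨h0 g, le_trans ?_ hsum⟩
    exact Finset.single_le_sum (fun g' _ => h0 g') (Finset.mem_univ g)
  have hcpt : IsCompact K :=
    IsCompact.of_isClosed_subset (isCompact_univ_pi fun _ => isCompact_Icc) hclosed hsubIcc
  obtain ⟨y, hyK, hymin⟩ := hcpt.exists_isMinOn hne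
    (continuous_finset_sum _ fun g _ => continuous_apply g).continuousOn
  exact ⟨y, hyK, fun z hz => hymin hz⟩

/-- Conversion of a fractional solution over proper patterns into a pi-type solution. -/
lemma toY_spec (n : ℕ) (L : ℝ) (l : Fin n → ℝ) (x : (Fin n → ℕ) →₀ NNReal)
    (hsupp : ∀ a ∈ x.support, a ∈ properPatterns n L l)
    (hcov : ∀ i, ∑ a ∈ x.support, ((x a : ℝ)) * ((a i : ℕ) : ℝ) = 1) :
    (∀ g : Fin n → Fin 2, (0:ℝ) ≤ ((x (fun i => ((g i : ℕ)))) : ℝ)) ∧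
    (∀ g : Fin n → Fin 2, ((x (fun i => ((g i : ℕ)))) : ℝ) ≠ 0 →
        ∑ i, l i * ((g i : ℕ) : ℝ) ≤ L) ∧
    (∀ i, ∑ g : Fin n → Fin 2, ((x (fun i => ((g i : ℕ)))) : ℝ) * ((g i : ℕ) : ℝ) = 1) ∧
    ∑ g : Fin n → Fin 2, ((x (fun i => ((g i : ℕ)))) : ℝ) = ∑ a ∈ x.support, ((x a : ℝ)) := by
  have hb : ∀ a ∈ x.support, ∀ i, a i ≤ 1 := fun a ha i => (hsupp a ha).1 i
  refine ⟨fun g => (x _).coe_nonneg, ?_, ?_, ?_⟩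
  · intro g hg
    have hx : x (fun i => ((g i : ℕ))) ≠ 0 := by
      intro h0; apply hg; rw [h0]; simp
    have hmem : (fun i => ((g i : ℕ)) : Fin n → ℕ) ∈ x.support :=
      Finsupp.mem_support_iff.mpr hx
    exact (hsupp _ hmem).2
  · intro i
    have := transport_sum x hb (fun a => ((a i : ℕ) : ℝ))
    rw [this]
    exact hcov i
  · have := transport_sum x hb (fun _ => (1:ℝ))
    simpa using this


/-- if `z_D^f(E) = 3` then `Δ_p(E) < 1`, i.e. `E` is a
proper IRUP instance. -/
theorem stmt_11 (n : ℕ) (L : ℝ) (l : Fin n → ℝ) (hE : IsInstance n L l)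
    (h : zDf n L l = 3) :
    properGap n L l < 1 := by
  classical
  obtain ⟨hn, hl, hmono, hlL⟩ := hE
  have hz : (2:ℝ≥0∞) < zCp n L l := by
    by_contra h2
    push_neg at h2
    have hlt : zCp n L l < 3 := lt_of_le_of_lt h2 (by norm_num)
    rw [zCp, zC] at hlt
    obtain ⟨c, hcmem, hclt⟩ := sInf_lt_iff.mp hlt
    obtain ⟨x, hxsupp, hxcov, hxval⟩ := hcmem
    obtain ⟨hy0, hyfeas, hycov, hysum⟩ := toY_spec n L l x hxsupp hxcov
    -- value of the solution, as a real number
    have hcq : c = ((∑ a ∈ x.support, x a : ℝ≥0) : ℝ≥0∞) := by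
      rw [hxval, ENNReal.coe_finset_sum]
    have hrval : ∑ g : Fin n → Fin 2, ((x (fun i => ((g i : ℕ)))) : ℝ)
        = ((∑ a ∈ x.support, x a : ℝ≥0) : ℝ) := by
      rw [hysum, NNReal.coe_sum]
    have hr3 : ∑ g : Fin n → Fin 2, ((x (fun i => ((g i : ℕ)))) : ℝ) ≤ 3 := by
      rw [hrval]
      have := hclt
      rw [hcq] at this
      have h3 : ((∑ a ∈ x.support, x a : ℝ≥0) : ℝ≥0∞) < ((3:ℝ≥0) : ℝ≥0∞) := by
        simpa using this
      exact le_of_lt (by exact_mod_cast ENNReal.coe_lt_coe.mp h3)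
    -- the compact feasible set is nonempty
    have hne : {y : (Fin n → Fin 2) → ℝ | (∀ g, 0 ≤ y g) ∧
        (∀ g, y g ≠ 0 → ∑ i, l i * ((g i : ℕ) : ℝ) ≤ L) ∧
        (∀ i, ∑ g, y g * ((g i : ℕ) : ℝ) = 1) ∧ ∑ g, y g ≤ 3}.Nonempty :=
      ⟨fun g => ((x (fun i => ((g i : ℕ)))) : ℝ), hy0, hyfeas, hycov, hr3⟩
    obtain ⟨y, ⟨hy0', hyfeas', hycov', hysum3⟩, hymin⟩ := exists_min_K n L l hne
    -- the minimum value is at most 2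
    have hc2 : ∑ g, y g ≤ 2 := by
      by_contra hcs
      push_neg at hcs
      have hofr : zCp n L l < ENNReal.ofReal (∑ g, y g) := by
        refine lt_of_le_of_lt h2 ?_
        rw [show (2:ℝ≥0∞) = ENNReal.ofReal 2 by norm_num]
        exact ENNReal.ofReal_lt_ofReal_iff (by linarith) |>.mpr hcs
      rw [zCp, zC] at hofr
      obtain ⟨c', hc'mem, hc'lt⟩ := sInf_lt_iff.mp hofr
      obtain ⟨x', hx'supp, hx'cov, hx'val⟩ := hc'mem
      obtain ⟨hy0'', hyfeas'', hycov'', hysum''⟩ := toY_spec n L l x' hx'supp hx'cov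
      have hcq' : c' = ((∑ a ∈ x'.support, x' a : ℝ≥0) : ℝ≥0∞) := by
        rw [hx'val, ENNReal.coe_finset_sum]
      have hrlt : ((∑ a ∈ x'.support, x' a : ℝ≥0) : ℝ) < ∑ g, y g := by
        have : c'.toReal < ∑ g, y g :=
          (ENNReal.lt_ofReal_iff_toReal_lt (by rw [hcq']; exact ENNReal.coe_ne_top)).mp hc'lt
        rwa [hcq', ENNReal.coe_toReal] at this
      have hr3' : ∑ g : Fin n → Fin 2, ((x' (fun i => ((g i : ℕ)))) : ℝ) ≤ 3 := by
        rw [hysum'', ← NNReal.coe_sum] at *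
        linarith
      have := hymin (fun g => ((x' (fun i => ((g i : ℕ)))) : ℝ))
        ⟨hy0'', hyfeas'', hycov'', hr3'⟩
      rw [hysum'', ← NNReal.coe_sum] at this
      linarith
    -- apply the key combinatorial lemma
    obtain ⟨g, hgne, hgcomp⟩ := key_lemma n L l hn hl y hy0' hyfeas' hycov' hc2
    -- build an integer solution with two patterns
    set a : Fin n → ℕ := fun i => ((g i : ℕ)) with ha
    set b : Fin n → ℕ := fun i => 1 - ((g i : ℕ)) with hb
    have hgle : ∀ i, ((g i : ℕ)) ≤ 1 := fun i => by have := (g i).isLt; omega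
    have hglt : ∀ i, ((g i : ℕ)) < 2 := fun i => (g i).isLt
    have hane : a ≠ b := by
      intro hab
      have := congrFun hab ⟨0, hn⟩
      simp only [ha, hb] at this
      have h2' := hglt ⟨0, hn⟩
      omega
    set X : (Fin n → ℕ) →₀ ℕ := Finsupp.single a 1 + Finsupp.single b 1 with hX
    have hXsupp : X.support = {a} ∪ {b} := by
      rw [hX, Finsupp.support_add_eq]
      · rw [Finsupp.support_single_ne_zero a one_ne_zero,
          Finsupp.support_single_ne_zero b one_ne_zero]
      · rw [Finsupp.support_single_ne_zero a one_ne_zero,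
          Finsupp.support_single_ne_zero b one_ne_zero]
        simpa using hane
    have hXa : X a = 1 := by
      rw [hX]; simp [Finsupp.single_apply, Ne.symm hane]
    have hXb : X b = 1 := by
      rw [hX]; simp [Finsupp.single_apply, hane]
    have hdisj : Disjoint ({a} : Finset (Fin n → ℕ)) {b} := by simpa using hane
    have hafeas : a ∈ feasiblePatterns n L l := by
      have := hyfeas' g hgne
      simpa [feasiblePatterns, ha] using this
    have hbfeas : b ∈ feasiblePatterns n L l := by
      have : ∑ i, l i * ((b i : ℕ) : ℝ) ≤ L := by
        have hcast : ∀ i, ((b i : ℕ) : ℝ) = 1 - ((g i : ℕ) : ℝ) := by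
          intro i
          rw [hb]
          push_cast [Nat.cast_sub (hgle i)]
          ring
        calc ∑ i, l i * ((b i : ℕ) : ℝ) = ∑ i, l i * (1 - ((g i : ℕ) : ℝ)) := by
              apply Finset.sum_congr rfl; intro i _; rw [hcast]
          _ ≤ L := hgcomp
      simpa [feasiblePatterns] using this
    have hmem2 : (2:ℝ≥0∞) ∈ {c : ℝ≥0∞ | ∃ x : (Fin n → ℕ) →₀ ℕ,
        (∀ a ∈ x.support, a ∈ feasiblePatterns n L l) ∧
        (∀ i, ∑ a ∈ x.support, x a * a i = 1) ∧
        c = ∑ a ∈ x.support, (x a : ℝ≥0∞)} := by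
      refine ⟨X, ?_, ?_, ?_⟩
      · intro p hp
        rw [hXsupp] at hp
        simp only [Finset.mem_union, Finset.mem_singleton] at hp
        rcases hp with rfl | rfl
        · exact hafeas
        · exact hbfeas
      · intro i
        rw [hXsupp, Finset.sum_union hdisj]
        simp only [Finset.sum_singleton, hXa, hXb, one_mul]
        have := hgle i
        simp only [ha, hb]
        omega
      · rw [hXsupp, Finset.sum_union hdisj]
        simp [hXa, hXb]
        norm_num
    have hle2 : zDf n L l ≤ 2 := by
      rw [zDf, zD]
      exact sInf_le hmem2
    rw [h] at hle2
    norm_num at hle2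
  -- conclude: properGap = 3 - zCp < 1
  rw [properGap, h]
  rcases le_or_gt (3:ℝ≥0∞) (zCp n L l) with h3 | h3
  · rw [tsub_eq_zero_of_le h3]; norm_num
  · refine ENNReal.sub_lt_of_lt_add h3.le ?_
    calc (3:ℝ≥0∞) = 1 + 2 := by norm_num
      _ < 1 + zCp n L l := by
          exact ENNReal.add_lt_add_left (by norm_num) hz
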